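/- Let a = (a₁,a₂) ∈ ℤ², b ∈ ℕ with gcd(a₁,a₂,b) = 1, and 0 < ε < 1. Then for all real N ≥ 1, the number of integers h with 1 ≤ h ≤ N such that ‖h·(a/b)‖ < ε is at most a universal constant times ((εb + 1)·(N/b) if N ≥ b, and min(N, εb) if N < b). -/

import Mathlib

noncomputable def nint2 (x : ℝ × ℝ) : ℝ := max |x.1 - round x.1| |x.2 - round x.2|

set_option maxHeartbeats 1000000 in
theorem bohr_partial_orbit :
    ∃ C : ℝ, 0 < C ∧ ∀ (a : ℤ × ℤ) (b : ℕ), 0 < b →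
      Int.gcd (Int.gcd a.1 a.2 : ℤ) (b : ℤ) = 1 →
      ∀ ε : ℝ, 0 < ε → ε < 1 → ∀ N : ℝ, 1 ≤ N →
      (({h : ℕ | 1 ≤ h ∧ (h : ℝ) ≤ N ∧
          nint2 ((h : ℝ) * ((a.1 : ℝ) / b), (h : ℝ) * ((a.2 : ℝ) / b)) < ε}.ncard : ℝ))
        ≤ C * (if (b : ℝ) ≤ N then (ε * b + 1) * (N / b) else min N (ε * b)) := by
  refine ⟨20, by norm_num, ?_⟩
  intro a b hb hgcd ε hε0 hε1 N hN
  set S : Set ℕ := {h : ℕ | 1 ≤ h ∧ (h : ℝ) ≤ N ∧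
      nint2 ((h : ℝ) * ((a.1 : ℝ) / b), (h : ℝ) * ((a.2 : ℝ) / b)) < ε} with hSdef
  have hb0 : (0:ℝ) < b := by exact_mod_cast hb
  have hbR : (b:ℝ) ≠ 0 := ne_of_gt hb0
  -- basic gcd data
  set d : ℕ := Int.gcd a.1 (b:ℤ) with hd
  have hd0 : 0 < d := Int.gcd_pos_iff.mpr (Or.inr (by exact_mod_cast hb.ne'))
  have hdvd_a : (d:ℤ) ∣ a.1 := Int.gcd_dvd_left _ _
  have hdvd_b : (d:ℤ) ∣ (b:ℤ) := Int.gcd_dvd_right _ _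
  have hdb : d ∣ b := by exact_mod_cast hdvd_b
  set m : ℕ := b / d with hm
  have hdm : d * m = b := Nat.mul_div_cancel' hdb
  have hm0 : 0 < m := Nat.div_pos (Nat.le_of_dvd hb hdb) hd0
  have hm0R : (0:ℝ) < m := by exact_mod_cast hm0
  have hd0R : (0:ℝ) < d := by exact_mod_cast hd0
  have hcop : IsCoprime (m:ℤ) (a.1 / (d:ℤ)) := by
    rw [Int.isCoprime_iff_gcd_eq_one, Int.gcd_comm]
    have h1 := Int.gcd_div_gcd_div_gcd (i := a.1) (j := (b:ℤ)) (by exact_mod_cast hd0)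
    have hbd : ((b:ℤ)) / (d:ℤ) = (m:ℤ) := by
      rw [← hdm]; push_cast
      rw [Int.mul_ediv_cancel_left _ (by exact_mod_cast hd0.ne')]
    rw [← hd] at h1
    rwa [hbd] at h1
  have hcopg : IsCoprime ((b:ℤ)) ((Int.gcd a.1 a.2 : ℕ) : ℤ) := by
    rw [Int.isCoprime_iff_gcd_eq_one, Int.gcd_comm]; exact hgcd
  -- the rounded values and remainders
  set r1 : ℕ → ℤ := fun h => round ((h:ℝ) * ((a.1:ℝ)/b)) with hr1
  set r2 : ℕ → ℤ := fun h => round ((h:ℝ) * ((a.2:ℝ)/b)) with hr2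
  set s1 : ℕ → ℤ := fun h => (h:ℤ) * a.1 - (b:ℤ) * r1 h with hs1
  set s2 : ℕ → ℤ := fun h => (h:ℤ) * a.2 - (b:ℤ) * r2 h with hs2
  have hcast1 : ∀ h : ℕ, ((s1 h : ℤ) : ℝ) = b * ((h:ℝ) * ((a.1:ℝ)/b) - (r1 h : ℝ)) := by
    intro h; simp only [hs1, hr1]; push_cast; field_simp
  have hcast2 : ∀ h : ℕ, ((s2 h : ℤ) : ℝ) = b * ((h:ℝ) * ((a.2:ℝ)/b) - (r2 h : ℝ)) := by
    intro h; simp only [hs2, hr2]; push_cast; field_simp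
  have habs1 : ∀ h ∈ S, |((s1 h : ℤ):ℝ)| < ε * b := by
    intro h hh
    have hlt : nint2 ((h : ℝ) * ((a.1 : ℝ) / b), (h : ℝ) * ((a.2 : ℝ) / b)) < ε := hh.2.2
    have h1 : |(h:ℝ) * ((a.1:ℝ)/b) - (r1 h : ℝ)| < ε :=
      lt_of_le_of_lt (le_max_left _ _) hlt
    rw [hcast1 h, abs_mul, abs_of_pos hb0]
    calc (b:ℝ) * |(h:ℝ) * ((a.1:ℝ)/b) - (r1 h : ℝ)| < b * ε :=
          (mul_lt_mul_iff_right₀ hb0).mpr h1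
      _ = ε * b := mul_comm _ _
  have habs2 : ∀ h ∈ S, |((s2 h : ℤ):ℝ)| < ε * b := by
    intro h hh
    have hlt : nint2 ((h : ℝ) * ((a.1 : ℝ) / b), (h : ℝ) * ((a.2 : ℝ) / b)) < ε := hh.2.2
    have h1 : |(h:ℝ) * ((a.2:ℝ)/b) - (r2 h : ℝ)| < ε :=
      lt_of_le_of_lt (le_max_right _ _) hlt
    rw [hcast2 h, abs_mul, abs_of_pos hb0]
    calc (b:ℝ) * |(h:ℝ) * ((a.2:ℝ)/b) - (r2 h : ℝ)| < b * ε :=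
          (mul_lt_mul_iff_right₀ hb0).mpr h1
      _ = ε * b := mul_comm _ _
  have hdd : ∀ h : ℕ, (d:ℤ) ∣ s1 h := by
    intro h; simp only [hs1]
    exact dvd_sub (hdvd_a.mul_left _) (hdvd_b.mul_right _)
  -- the injection
  set Φ : ℕ → ℤ × ℤ × ℕ := fun h => (s1 h / (d:ℤ), s2 h / (m:ℤ), (h-1)/b) with hΦ
  have hinj : S.InjOn Φ := by
    intro h hh h' hh' heq
    have hq1 : s1 h / (d:ℤ) = s1 h' / (d:ℤ) := congrArg Prod.fst heq
    have hq2 : s2 h / (m:ℤ) = s2 h' / (m:ℤ) := congrArg (fun p => p.2.1) heq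
    have hq3 : (h-1)/b = (h'-1)/b := congrArg (fun p => p.2.2) heq
    have e1 : s1 h = s1 h' := by
      rw [← Int.mul_ediv_cancel' (hdd h), ← Int.mul_ediv_cancel' (hdd h'), hq1]
    have key1 : ((h:ℤ) - h') * a.1 = b * (r1 h - r1 h') := by
      simp only [hs1] at e1; linear_combination e1
    have e2b : (b:ℤ) ∣ (s2 h - s2 h') * a.1 :=
      ⟨(r1 h - r1 h') * a.2 - (r2 h - r2 h') * a.1, by
        simp only [hs2]; linear_combination a.2 * key1⟩
    have e2m : (m:ℤ) ∣ s2 h - s2 h' := by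
      have hbdm : (b:ℤ) = (d:ℤ) * m := by exact_mod_cast hdm.symm
      have hx : (d:ℤ) * (m:ℤ) ∣ (d:ℤ) * ((s2 h - s2 h') * (a.1 / (d:ℤ))) := by
        have he : (d:ℤ) * ((s2 h - s2 h') * (a.1 / (d:ℤ)))
            = (s2 h - s2 h') * ((d:ℤ) * (a.1 / (d:ℤ))) := by ring
        rw [he, Int.mul_ediv_cancel' hdvd_a, ← hbdm]
        exact e2b
      have := (mul_dvd_mul_iff_left (a := (d:ℤ)) (by exact_mod_cast hd0.ne')).mp hx
      exact hcop.dvd_of_dvd_mul_right this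
    have e2 : s2 h = s2 h' := by
      have hmod : s2 h % (m:ℤ) = s2 h' % (m:ℤ) := by
        rw [Int.emod_eq_emod_iff_emod_sub_eq_zero]
        exact Int.emod_eq_zero_of_dvd e2m
      calc s2 h = (m:ℤ) * (s2 h / (m:ℤ)) + s2 h % (m:ℤ) := (Int.mul_ediv_add_emod _ _).symm
        _ = (m:ℤ) * (s2 h' / (m:ℤ)) + s2 h' % (m:ℤ) := by rw [hq2, hmod]
        _ = s2 h' := Int.mul_ediv_add_emod _ _
    have key2 : ((h:ℤ) - h') * a.2 = b * (r2 h - r2 h') := by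
      simp only [hs2] at e2; linear_combination e2
    have hdvd_h : (b:ℤ) ∣ ((h:ℤ) - h') := by
      have hg : (b:ℤ) ∣ ((h:ℤ) - h') * ((Int.gcd a.1 a.2 : ℕ) : ℤ) := by
        refine ⟨(r1 h - r1 h') * Int.gcdA a.1 a.2 + (r2 h - r2 h') * Int.gcdB a.1 a.2, ?_⟩
        rw [Int.gcd_eq_gcd_ab a.1 a.2]
        linear_combination Int.gcdA a.1 a.2 * key1 + Int.gcdB a.1 a.2 * key2
      exact hcopg.dvd_of_dvd_mul_right hg
    -- conclude h = h'
    obtain ⟨k, hk⟩ := hdvd_h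
    have h1 : 1 ≤ h := hh.1
    have h1' : 1 ≤ h' := hh'.1
    have hA' : b*((h-1)/b) + (h-1)%b + 1 = h := by
      rw [Nat.div_add_mod, Nat.sub_add_cancel h1]
    have hB' : b*((h-1)/b) + (h'-1)%b + 1 = h' := by
      rw [hq3, Nat.div_add_mod, Nat.sub_add_cancel h1']
    have hrb : (h-1)%b < b := Nat.mod_lt _ hb
    have hrb' : (h'-1)%b < b := Nat.mod_lt _ hb
    have hcast : (((h-1)%b : ℕ):ℤ) - (((h'-1)%b : ℕ):ℤ) = (b:ℤ) * k := by
      have cA : ((b*((h-1)/b) + (h-1)%b + 1 : ℕ) : ℤ) = (h:ℤ) := by exact_mod_cast congrArg (Nat.cast (R := ℤ)) hA'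
      have cB : ((b*((h-1)/b) + (h'-1)%b + 1 : ℕ) : ℤ) = (h':ℤ) := by exact_mod_cast congrArg (Nat.cast (R := ℤ)) hB'
      push_cast at cA cB ⊢
      linear_combination hk + cA - cB
    have hzero : (((h-1)%b : ℕ):ℤ) - (((h'-1)%b : ℕ):ℤ) = 0 := by
      refine Int.eq_zero_of_abs_lt_dvd ⟨k, hcast⟩ ?_
      rw [abs_sub_lt_iff]
      have hx1 : (((h-1)%b : ℕ):ℤ) < b := by exact_mod_cast hrb
      have hx2 : (((h'-1)%b : ℕ):ℤ) < b := by exact_mod_cast hrb'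
      have hx3 : (0:ℤ) ≤ (((h'-1)%b : ℕ):ℤ) := Int.ofNat_nonneg _
      have hx4 : (0:ℤ) ≤ (((h-1)%b : ℕ):ℤ) := Int.ofNat_nonneg _
      constructor <;> linarith
    have hre : (h-1)%b = (h'-1)%b := by exact_mod_cast sub_eq_zero.mp hzero
    rw [← hA', ← hB', hre]
  -- finiteness and trivial bound
  have hsub : S ⊆ ↑(Finset.Icc 1 ⌊N⌋₊) := by
    intro h hh
    simp only [Finset.coe_Icc, Set.mem_Icc]
    exact ⟨hh.1, Nat.le_floor hh.2.1⟩
  have hSN : (S.ncard : ℝ) ≤ N := by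
    have h1 : S.ncard ≤ (Finset.Icc 1 ⌊N⌋₊).card := by
      rw [← Set.ncard_coe_finset]; exact Set.ncard_le_ncard hsub (Finset.finite_toSet _)
    have h2 : (Finset.Icc 1 ⌊N⌋₊).card = ⌊N⌋₊ := by rw [Nat.card_Icc]; omega
    have h3 : (⌊N⌋₊ : ℝ) ≤ N := Nat.floor_le (by linarith)
    calc (S.ncard:ℝ) ≤ ((Finset.Icc 1 ⌊N⌋₊).card : ℝ) := by exact_mod_cast h1
      _ = (⌊N⌋₊:ℝ) := by rw [h2]
      _ ≤ N := h3
  set F1 : ℤ := ⌊ε * b / d⌋ with hF1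
  set F2 : ℤ := ⌊ε * d⌋ with hF2
  have hF1nn : 0 ≤ F1 := by rw [hF1]; exact Int.floor_nonneg.mpr (by positivity)
  have hF2nn : 0 ≤ F2 := by rw [hF2]; exact Int.floor_nonneg.mpr (by positivity)
  have hF1le : (F1:ℝ) ≤ ε * b / d := Int.floor_le _
  have hF2le : (F2:ℝ) ≤ ε * d := Int.floor_le _
  have hcard : ∀ K : ℕ, (∀ h ∈ S, (h-1)/b < K) →
      (S.ncard : ℝ) ≤ (2*(ε*b/(d:ℝ))+1) * ((2*(ε*(d:ℝ))+2) * K) := by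
    intro K hK
    set T : Finset (ℤ × ℤ × ℕ) :=
      Finset.Icc (-F1) F1 ×ˢ (Finset.Icc (-F2-1) F2 ×ˢ Finset.range K) with hT
    have himg : Φ '' S ⊆ ↑T := by
      rintro _ ⟨h, hh, rfl⟩
      rw [Finset.mem_coe, hT]
      simp only [Finset.mem_product, Finset.mem_Icc, Finset.mem_range, hΦ]
      have habsa := habs1 h hh
      have habsb := habs2 h hh
      -- first coordinate
      have hts : (d:ℤ) * (s1 h / (d:ℤ)) = s1 h := Int.mul_ediv_cancel' (hdd h)
      have htsR : (d:ℝ) * ((s1 h / (d:ℤ) : ℤ):ℝ) = ((s1 h :ℤ):ℝ) := by exact_mod_cast congrArg (Int.cast (R := ℝ)) hts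
      have ht1 : |((s1 h / (d:ℤ) : ℤ):ℝ)| < ε * b / d := by
        have h1 : |(d:ℝ) * ((s1 h / (d:ℤ) : ℤ):ℝ)| < ε * b := by rw [htsR]; exact habsa
        rw [abs_mul, abs_of_pos hd0R] at h1
        rw [lt_div_iff₀ hd0R]
        linarith
      -- second coordinate
      have hum : (m:ℤ) * (s2 h / (m:ℤ)) + s2 h % (m:ℤ) = s2 h := Int.mul_ediv_add_emod _ _
      have humR : (m:ℝ) * ((s2 h / (m:ℤ) : ℤ):ℝ) + ((s2 h % (m:ℤ) : ℤ):ℝ) = ((s2 h:ℤ):ℝ) := by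
        exact_mod_cast congrArg (Int.cast (R := ℝ)) hum
      have hr0 : (0:ℝ) ≤ ((s2 h % (m:ℤ) : ℤ):ℝ) := by
        exact_mod_cast Int.emod_nonneg (s2 h) (by exact_mod_cast hm0.ne')
      have hrm : ((s2 h % (m:ℤ) : ℤ):ℝ) < m := by
        exact_mod_cast Int.emod_lt_of_pos (s2 h) (by exact_mod_cast hm0)
      have hεb' : ε * b = ε * d * m := by rw [← hdm]; push_cast; ring
      have hu1 : ((s2 h / (m:ℤ) : ℤ):ℝ) < ε * d := by
        have h1 : (m:ℝ) * ((s2 h / (m:ℤ) : ℤ):ℝ) ≤ ((s2 h:ℤ):ℝ) := by linarith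
        have h2 : ((s2 h:ℤ):ℝ) < ε*b := lt_of_le_of_lt (le_abs_self _) habsb
        have h3 : (m:ℝ) * ((s2 h / (m:ℤ) : ℤ):ℝ) < (m:ℝ) * (ε * d) := by
          rw [hεb'] at h2; nlinarith
        exact (mul_lt_mul_iff_right₀ hm0R).mp h3
      have hu2 : -(ε*d) - 1 < ((s2 h / (m:ℤ) : ℤ):ℝ) := by
        have h1 : ((s2 h:ℤ):ℝ) - m < (m:ℝ) * ((s2 h / (m:ℤ) : ℤ):ℝ) := by linarith
        have h2 : -(ε*b) < ((s2 h:ℤ):ℝ) := by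
          have := (abs_lt.mp habsb).1; linarith
        have h3 : (m:ℝ) * (-(ε*d) - 1) < (m:ℝ) * ((s2 h / (m:ℤ) : ℤ):ℝ) := by
          rw [hεb'] at h2; nlinarith
        exact (mul_lt_mul_iff_right₀ hm0R).mp h3
      refine ⟨⟨?_, ?_⟩, ⟨?_, ?_⟩, hK h hh⟩
      · rw [neg_le]
        apply Int.le_floor.mpr
        push_cast
        have := neg_abs_le ((s1 h / (d:ℤ) : ℤ):ℝ)
        linarith
      · apply Int.le_floor.mpr
        have := le_abs_self ((s1 h / (d:ℤ) : ℤ):ℝ)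
        linarith
      · have hx : (-(s2 h / (m:ℤ)) - 1 : ℤ) ≤ F2 := by
          apply Int.le_floor.mpr
          push_cast
          linarith
        omega
      · exact Int.le_floor.mpr (le_of_lt hu1)
    have hle : (S.ncard : ℝ) ≤ (T.card : ℝ) := by
      have h0 := Set.ncard_le_ncard himg T.finite_toSet
      rw [Set.ncard_image_of_injOn hinj, Set.ncard_coe_finset] at h0
      exact_mod_cast h0
    have c1 : ((Finset.Icc (-F1) F1).card : ℝ) ≤ 2*(ε*b/(d:ℝ))+1 := by
      rw [Int.card_Icc]
      have hx : ((F1 + 1 - -F1).toNat : ℤ) = 2*F1 + 1 := by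
        rw [Int.toNat_of_nonneg (by omega)]; ring
      have hxR : ((F1 + 1 - -F1).toNat : ℝ) = 2*(F1:ℝ) + 1 := by exact_mod_cast hx
      rw [hxR]; linarith
    have c2 : ((Finset.Icc (-F2-1) F2).card : ℝ) ≤ 2*(ε*(d:ℝ))+2 := by
      rw [Int.card_Icc]
      have hx : ((F2 + 1 - (-F2-1)).toNat : ℤ) = 2*F2 + 2 := by
        rw [Int.toNat_of_nonneg (by omega)]; ring
      have hxR : ((F2 + 1 - (-F2-1)).toNat : ℝ) = 2*(F2:ℝ) + 2 := by exact_mod_cast hx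
      rw [hxR]; linarith
    have hTcard : (T.card : ℝ) ≤ (2*(ε*b/(d:ℝ))+1) * ((2*(ε*(d:ℝ))+2) * K) := by
      have he : (T.card : ℝ) = ((Finset.Icc (-F1) F1).card : ℝ) *
          (((Finset.Icc (-F2-1) F2).card : ℝ) * K) := by
        rw [hT, Finset.card_product, Finset.card_product, Finset.card_range]
        push_cast; ring
      rw [he]
      apply mul_le_mul c1 _ (by positivity) (by positivity)
      exact mul_le_mul_of_nonneg_right c2 (by positivity)
    linarith
  have hd1R : (1:ℝ) ≤ d := by exact_mod_cast hd0
  have hdbR : (d:ℝ) ≤ b := by exact_mod_cast Nat.le_of_dvd hb hdb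
  have k1 : (ε*b/(d:ℝ))*(ε*d) = ε^2*b := by field_simp
  have k2 : ε*b/(d:ℝ) ≤ ε*b := div_le_self (by positivity) hd1R
  have k3 : ε*(d:ℝ) ≤ ε*b := by nlinarith
  have k4 : ε^2*b ≤ ε*b := by nlinarith [mul_nonneg (mul_nonneg hε0.le (sub_nonneg.mpr hε1.le)) hb0.le]
  by_cases hbN : (b:ℝ) ≤ N
  · rw [if_pos hbN]
    set K : ℕ := (⌊N⌋₊ - 1)/b + 1 with hK
    have hKb : ∀ h ∈ S, (h-1)/b < K := by
      intro h hh
      have hhf : h ≤ ⌊N⌋₊ := Nat.le_floor hh.2.1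
      have hdd' : (h-1)/b ≤ (⌊N⌋₊-1)/b := Nat.div_le_div_right (by omega)
      omega
    have hfloor1 : 1 ≤ ⌊N⌋₊ := Nat.le_floor (by exact_mod_cast hN)
    have hfl : (⌊N⌋₊ : ℝ) ≤ N := Nat.floor_le (by linarith)
    have hKR : (K:ℝ) ≤ 2*N/b := by
      have e1 : ((⌊N⌋₊ - 1 : ℕ):ℝ) ≤ N - 1 := by
        rw [Nat.cast_sub hfloor1]
        push_cast; linarith
      have e2 : (((⌊N⌋₊-1)/b : ℕ):ℝ) ≤ (N-1)/b :=
        le_trans Nat.cast_div_le (by apply div_le_div_of_nonneg_right e1 hb0.le)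
      have e3 : (N-1)/b + 1 ≤ 2*N/b := by
        rw [div_add' _ _ _ hbR]
        apply div_le_div_of_nonneg_right _ hb0.le
        linarith
      have e4 : (K:ℝ) = (((⌊N⌋₊-1)/b : ℕ):ℝ) + 1 := by rw [hK]; push_cast; ring
      linarith
    have hmain := hcard K hKb
    have hfac : (2*(ε*b/(d:ℝ))+1) * (2*(ε*(d:ℝ))+2) ≤ 10*(ε*b) + 2 := by
      nlinarith [k1, k2, k3, k4]
    calc (S.ncard:ℝ) ≤ (2*(ε*b/(d:ℝ))+1) * ((2*(ε*(d:ℝ))+2) * K) := hmain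
      _ = (2*(ε*b/(d:ℝ))+1) * (2*(ε*(d:ℝ))+2) * K := by ring
      _ ≤ (10*(ε*b)+2) * (2*N/b) := by
          apply mul_le_mul hfac hKR (by positivity) (by positivity)
      _ ≤ 20 * ((ε*b+1)*(N/b)) := by
          have hX : (0:ℝ) ≤ N/b := by positivity
          have he : (10*(ε*b)+2)*(2*N/b) = (20*(ε*b)+4)*(N/b) := by ring
          have he2 : 20*((ε*b+1)*(N/b)) = (20*(ε*b)+20)*(N/b) := by ring
          rw [he, he2]
          apply mul_le_mul_of_nonneg_right _ hX
          linarith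
  · push_neg at hbN
    rw [if_neg (not_le.mpr hbN)]
    have hK1 : ∀ h ∈ S, (h-1)/b < 1 := by
      intro h hh
      have hhb : (h:ℝ) < b := lt_of_le_of_lt hh.2.1 hbN
      have hhb' : h < b := by exact_mod_cast hhb
      have : (h-1)/b = 0 := Nat.div_eq_of_lt (by omega)
      omega
    by_cases hεb : 1 ≤ ε * b
    · have hmain := hcard 1 hK1
      have hbound : (S.ncard:ℝ) ≤ 12*(ε*b) := by
        have hx : (2*(ε*b/(d:ℝ))+1) * ((2*(ε*(d:ℝ))+2) * ((1:ℕ):ℝ)) ≤ 10*(ε*b)+2 := by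
          push_cast
          nlinarith [k1, k2, k3, k4]
        calc (S.ncard:ℝ) ≤ _ := hmain
          _ ≤ 10*(ε*b)+2 := hx
          _ ≤ 12*(ε*b) := by linarith
      rcases le_total N (ε*b) with hc | hc
      · rw [min_eq_left hc]; linarith
      · rw [min_eq_right hc]; linarith
    · push_neg at hεb
      have hSe : S = ∅ := by
        ext h
        simp only [Set.mem_empty_iff_false, iff_false]
        intro hh
        have ha1 := habs1 h hh
        have ha2 := habs2 h hh
        have hz1 : s1 h = 0 := by
          have hy : |((s1 h : ℤ) : ℝ)| < 1 := by linarith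
          have hx1 : (-1 : ℤ) < s1 h := by exact_mod_cast (abs_lt.mp hy).1
          have hx2 : s1 h < 1 := by exact_mod_cast (abs_lt.mp hy).2
          omega
        have hz2 : s2 h = 0 := by
          have hy : |((s2 h : ℤ) : ℝ)| < 1 := by linarith
          have hx1 : (-1 : ℤ) < s2 h := by exact_mod_cast (abs_lt.mp hy).1
          have hx2 : s2 h < 1 := by exact_mod_cast (abs_lt.mp hy).2
          omega
        simp only [hs1] at hz1
        simp only [hs2] at hz2
        have hb1 : (b:ℤ) ∣ (h:ℤ) * a.1 := ⟨r1 h, by linear_combination hz1⟩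
        have hb2 : (b:ℤ) ∣ (h:ℤ) * a.2 := ⟨r2 h, by linear_combination hz2⟩
        obtain ⟨u, hu⟩ := hb1
        obtain ⟨v, hv⟩ := hb2
        have hbg : (b:ℤ) ∣ (h:ℤ) * ((Int.gcd a.1 a.2 : ℕ):ℤ) :=
          ⟨u * Int.gcdA a.1 a.2 + v * Int.gcdB a.1 a.2, by
            rw [Int.gcd_eq_gcd_ab a.1 a.2]
            linear_combination Int.gcdA a.1 a.2 * hu + Int.gcdB a.1 a.2 * hv⟩
        have hbh : (b:ℤ) ∣ (h:ℤ) := hcopg.dvd_of_dvd_mul_right hbg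
        have hbh' : b ∣ h := by exact_mod_cast hbh
        have hble : b ≤ h := Nat.le_of_dvd hh.1 hbh'
        have hbleR : (b:ℝ) ≤ h := by exact_mod_cast hble
        have := hh.2.1
        linarith
      rw [hSe]
      simp only [Set.ncard_empty, Nat.cast_zero]
      have hmin : (0:ℝ) ≤ min N (ε*b) := le_min (by linarith) (by positivity)
      linarith
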